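/- Let (S,P) be an embedded coalition and i ∉ S. In the game ṽ = c·[α_i(S,P)·e^{(S∪{i}, τ_i^S(P))} + e^{(S,P)}], player i is an α-null player: [mc^α_i(ṽ)](T,Q) = 0 for every embedded coalition (T,Q) with i ∈ T. Consequently, any value φ satisfying Additivity and the Null-Player Axiom^α satisfies φ_i(c·e^{(S,P)}) = −φ_i(c·α_i(S,P)·e^{(S∪{i}, τ_i^S(P))}). -/

import Mathlib

open Finset

open scoped Classical

/-- A partition of the player set `Fin n`; following the paper's convention,
`∅` is a member of every partition. -/
def IsPartition {n : ℕ} (P : Finset (Finset (Fin n))) : Prop :=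
  ∅ ∈ P ∧ ∀ a : Fin n, ∃! B : Finset (Fin n), B ∈ P ∧ a ∈ B

/-- The set `𝒫` of all partitions of `Fin n`. -/
noncomputable def allPartitions (n : ℕ) : Finset (Finset (Finset (Fin n))) :=
  Finset.univ.filter IsPartition

/-- `C_i^π`: the set of players appearing after `i` in the ordering `π`. -/
def Cafter {n : ℕ} (π : Equiv.Perm (Fin n)) (i : Fin n) : Finset (Fin n) :=
  Finset.univ.filter fun j => π.symm i < π.symm j

/-- `P_{[S]}` : the partition obtained from `P` by merging all members of `S`
into a single coalition. -/
def pmerge {n : ℕ} (P : Finset (Finset (Fin n))) (S : Finset (Fin n)) :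
    Finset (Finset (Fin n)) :=
  P.image (· \ S) ∪ {S}

/-- `τ_i^T(P)` : the partition obtained from `P` by transferring `i` from its
coalition to the coalition `T` (taking `T = ∅` means that `i` forms a new
singleton coalition). -/
def moveTo {n : ℕ} (P : Finset (Finset (Fin n))) (i : Fin n) (T : Finset (Fin n)) :
    Finset (Finset (Fin n)) :=
  ((P.erase T).image fun B => B.erase i) ∪ {insert i T} ∪ {∅}

/-- A partition-function game: a real value for every (embedded) coalition. -/
abbrev Game (n : ℕ) := Finset (Fin n) → Finset (Finset (Fin n)) → ℝ

/-- A system of weights `α_i(S, P)` (meaningful for `i ∉ S`). -/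
abbrev Weights (n : ℕ) := Fin n → Finset (Fin n) → Finset (Finset (Fin n)) → ℝ

/-- The partition `{N, ∅}` in which the grand coalition is embedded. -/
def grandPart (n : ℕ) : Finset (Finset (Fin n)) := {Finset.univ, ∅}

/-- Normalization: for every embedded coalition `(S, P)` with `i ∈ S`,
`∑_{T ∈ P_{−S}} α_i(S_{−i}, τ_i^T(P)) = 1`. -/
def Normalized {n : ℕ} (w : Weights n) : Prop :=
  ∀ (i : Fin n) (S : Finset (Fin n)) (P : Finset (Finset (Fin n))),
    IsPartition P → S ∈ P → i ∈ S →
      ∑ T ∈ P.erase S, w i (S.erase i) (moveTo P i T) = 1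

/-- Weights take values in `[0, 1]`. -/
def InRange {n : ℕ} (w : Weights n) : Prop :=
  ∀ (i : Fin n) (S : Finset (Fin n)) (P : Finset (Finset (Fin n))),
    i ∉ S → 0 ≤ w i S P ∧ w i S P ≤ 1

/-- `pr^α_π(P) = ∏_{i ∈ N} α_i(C_i^π, P_{[C_i^π]})`. -/
noncomputable def pr {n : ℕ} (w : Weights n) (π : Equiv.Perm (Fin n))
    (P : Finset (Finset (Fin n))) : ℝ :=
  ∏ i : Fin n, w i (Cafter π i) (pmerge P (Cafter π i))

/-- The extended Shapley value `φ^α` (formula (1) of the paper). -/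
noncomputable def esv {n : ℕ} (w : Weights n) (v : Game n) (i : Fin n) : ℝ :=
  ((n.factorial : ℝ))⁻¹ * ∑ π : Equiv.Perm (Fin n), ∑ P ∈ allPartitions n,
    pr w π P *
      (v (insert i (Cafter π i)) (pmerge P (insert i (Cafter π i))) -
        v (Cafter π i) (pmerge P (Cafter π i)))

/-- The `α`-marginal contribution `[mc^α_i(v)](S, P)`. -/
noncomputable def mc {n : ℕ} (w : Weights n) (v : Game n) (i : Fin n)
    (S : Finset (Fin n)) (P : Finset (Finset (Fin n))) : ℝ :=
  ∑ T ∈ P.erase S, w i (S.erase i) (moveTo P i T) * (v S P - v (S.erase i) (moveTo P i T))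

/-- A genuine partition-function game: it vanishes off embedded coalitions
(and on the empty coalition). -/
def IsGame {n : ℕ} (v : Game n) : Prop :=
  ∀ S P, ¬ (IsPartition P ∧ S ∈ P ∧ S ≠ ∅) → v S P = 0

/-- The simple game `e^{(S₀, P₀)}`. -/
noncomputable def sgame {n : ℕ} (S₀ : Finset (Fin n)) (P₀ : Finset (Finset (Fin n))) :
    Game n :=
  fun S P => if S = S₀ ∧ P = P₀ then 1 else 0

/-- The permuted game `π(v)`, with `π(v)(S, P) = v(π(S), π(P))`. -/
def permGame {n : ℕ} (π : Equiv.Perm (Fin n)) (v : Game n) : Game n :=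
  fun S P => v (S.image π) (P.image (Finset.image π))

lemma part_eq {n : ℕ} {P : Finset (Finset (Fin n))} (hP : IsPartition P)
    {C D : Finset (Fin n)} (hC : C ∈ P) (hD : D ∈ P) {a : Fin n}
    (haC : a ∈ C) (haD : a ∈ D) : C = D := by
  obtain ⟨B, -, hu⟩ := hP.2 a
  rw [hu C ⟨hC, haC⟩, hu D ⟨hD, haD⟩]

lemma mem_moveTo {n : ℕ} {P : Finset (Finset (Fin n))} {i : Fin n}
    {T X : Finset (Fin n)} :
    X ∈ moveTo P i T ↔ (∃ C ∈ P.erase T, C.erase i = X) ∨ X = insert i T ∨ X = ∅ := by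
  simp only [moveTo, Finset.mem_union, Finset.mem_image, Finset.mem_singleton, or_assoc]

lemma moveTo_isPartition {n : ℕ} {P : Finset (Finset (Fin n))} (hP : IsPartition P)
    {S : Finset (Fin n)} (hS : S ∈ P) {i : Fin n} (hi : i ∉ S) :
    IsPartition (moveTo P i S) := by
  constructor
  · exact mem_moveTo.2 (Or.inr (Or.inr rfl))
  · intro a
    by_cases hai : a = i
    · subst hai
      refine ⟨insert a S, ⟨mem_moveTo.2 (Or.inr (Or.inl rfl)), mem_insert_self _ _⟩, ?_⟩
      rintro Y ⟨hY, haY⟩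
      rcases mem_moveTo.1 hY with ⟨C, hC, rfl⟩ | rfl | rfl
      · exact absurd haY (notMem_erase _ _)
      · rfl
      · simp at haY
    · obtain ⟨D, ⟨hD, haD⟩, hDu⟩ := hP.2 a
      by_cases hDS : D = S
      · subst hDS
        refine ⟨insert i D, ⟨mem_moveTo.2 (Or.inr (Or.inl rfl)), mem_insert_of_mem haD⟩, ?_⟩
        rintro Y ⟨hY, haY⟩
        rcases mem_moveTo.1 hY with ⟨C, hC, rfl⟩ | rfl | rfl
        · exfalso
          rcases mem_erase.1 hC with ⟨hCne, hCP⟩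
          exact hCne (hDu C ⟨hCP, (mem_erase.1 haY).2⟩)
        · rfl
        · simp at haY
      · refine ⟨D.erase i, ⟨mem_moveTo.2 (Or.inl ⟨D, mem_erase.2 ⟨hDS, hD⟩, rfl⟩),
          mem_erase.2 ⟨hai, haD⟩⟩, ?_⟩
        rintro Y ⟨hY, haY⟩
        rcases mem_moveTo.1 hY with ⟨C, hC, rfl⟩ | rfl | rfl
        · rcases mem_erase.1 hC with ⟨hCne, hCP⟩
          rw [hDu C ⟨hCP, (mem_erase.1 haY).2⟩]
        · exfalso
          rcases mem_insert.1 haY with h | h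
          · exact hai h
          · exact hDS (hDu S ⟨hS, h⟩).symm
        · simp at haY

lemma moveTo_moveTo {n : ℕ} {P : Finset (Finset (Fin n))} (hP : IsPartition P)
    {B S : Finset (Fin n)} {i : Fin n} (hB : B ∈ P) (hiB : i ∈ B)
    (hS : S ∈ P) (hiS : i ∉ S) :
    moveTo (moveTo P i S) i (B.erase i) = P := by
  have hins : insert i (B.erase i) = B := insert_erase hiB
  ext X
  rw [mem_moveTo]
  constructor
  · rintro (⟨Y, hY, rfl⟩ | rfl | rfl)
    · rcases mem_erase.1 hY with ⟨hYne, hYQ⟩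
      rcases mem_moveTo.1 hYQ with ⟨C, hC, rfl⟩ | rfl | rfl
      · rcases mem_erase.1 hC with ⟨hCS, hCP⟩
        by_cases hiC : i ∈ C
        · exact absurd (by rw [part_eq hP hCP hB hiC hiB]) hYne
        · rw [Finset.erase_idem, erase_eq_of_notMem hiC]
          exact hCP
      · rw [erase_insert hiS]; exact hS
      · rw [Finset.erase_empty]; exact hP.1
    · rw [hins]; exact hB
    · exact hP.1
  · intro hX
    by_cases hXB : X = B
    · right; left; rw [hins, hXB]
    · by_cases hXe : X = ∅
      · right; right; exact hXe
      · left
        have hiX : i ∉ X := fun h => hXB (part_eq hP hX hB h hiB)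
        have hXBe : X ≠ B.erase i := by
          intro h
          obtain ⟨x, hx⟩ := nonempty_iff_ne_empty.2 hXe
          have hxB : x ∈ B := mem_of_mem_erase (h ▸ hx)
          exact hXB (part_eq hP hX hB hx hxB)
        by_cases hXS : X = S
        · refine ⟨insert i S, mem_erase.2 ⟨?_, mem_moveTo.2 (Or.inr (Or.inl rfl))⟩, ?_⟩
          · intro h
            have := mem_insert_self i S
            rw [h] at this
            exact notMem_erase i B this
          · rw [erase_insert hiS, hXS]
        · exact ⟨X, mem_erase.2 ⟨hXBe, mem_moveTo.2
            (Or.inl ⟨X, mem_erase.2 ⟨hXS, hX⟩, erase_eq_of_notMem hiX⟩)⟩,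
            erase_eq_of_notMem hiX⟩

/-- In the game `ṽ = c·[α_i(S,P)·e^{(S∪{i}, τ_i^S(P))} + e^{(S,P)}]`, player
`i` is an `α`-null player; consequently, any value satisfying Additivity and
the Null-Player Axiom^α gives
`φ_i(c·e^{(S,P)}) = −φ_i(c·α_i(S,P)·e^{(S∪{i}, τ_i^S(P))})`. -/
theorem stmt11 (n : ℕ) (w : Weights n) (hr : InRange w) (hnorm : Normalized w)
    (S : Finset (Fin n)) (P : Finset (Finset (Fin n))) (hP : IsPartition P)
    (hS : S ∈ P) (hSne : S ≠ ∅) (i : Fin n) (hi : i ∉ S) (c : ℝ) :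
    (∀ T Q, IsPartition Q → T ∈ Q → i ∈ T →
        mc w
          (fun T' Q' => c * (w i S P * sgame (insert i S) (moveTo P i S) T' Q' +
            sgame S P T' Q'))
          i T Q = 0) ∧
    (∀ φ : Game n → Fin n → ℝ,
      (∀ v₁ v₂, IsGame v₁ → IsGame v₂ → ∀ j : Fin n,
        φ (fun T' Q' => v₁ T' Q' + v₂ T' Q') j = φ v₁ j + φ v₂ j) →
      (∀ v, IsGame v → ∀ j : Fin n,
        (∀ T Q, IsPartition Q → T ∈ Q → j ∈ T → mc w v j T Q = 0) → φ v j = 0) →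
      φ (fun T' Q' => c * sgame S P T' Q') i =
        - φ (fun T' Q' => c * w i S P * sgame (insert i S) (moveTo P i S) T' Q') i) := by
  classical
  obtain ⟨B, ⟨hBP, hiB⟩, hBu⟩ := hP.2 i
  have hne1 : insert i S ≠ S := fun h => hi (h ▸ mem_insert_self i S)
  have hne2 : S ≠ insert i S := fun h => hne1 h.symm
  have hmc : ∀ T Q, IsPartition Q → T ∈ Q → i ∈ T →
      mc w
        (fun T' Q' => c * (w i S P * sgame (insert i S) (moveTo P i S) T' Q' +
          sgame S P T' Q'))
        i T Q = 0 := by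
    intro T Q hQ hT hiT
    by_cases hcase : T = insert i S ∧ Q = moveTo P i S
    · obtain ⟨rfl, rfl⟩ := hcase
      have hTS : (insert i S).erase i = S := erase_insert hi
      have hBne : B ≠ S := fun h => hi (h ▸ hiB)
      have hmem : B.erase i ∈ (moveTo P i S).erase (insert i S) := by
        refine mem_erase.2 ⟨?_, mem_moveTo.2 (Or.inl ⟨B, mem_erase.2 ⟨hBne, hBP⟩, rfl⟩)⟩
        intro h
        have := mem_insert_self i S
        rw [← h] at this
        exact notMem_erase i B this
      have key : ∀ R ∈ (moveTo P i S).erase (insert i S),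
          w i ((insert i S).erase i) (moveTo (moveTo P i S) i R) *
            (c * (w i S P *
                sgame (insert i S) (moveTo P i S) (insert i S) (moveTo P i S) +
              sgame S P (insert i S) (moveTo P i S)) -
             c * (w i S P *
                sgame (insert i S) (moveTo P i S) ((insert i S).erase i)
                  (moveTo (moveTo P i S) i R) +
              sgame S P ((insert i S).erase i) (moveTo (moveTo P i S) i R))) =
          w i S (moveTo (moveTo P i S) i R) * (c * w i S P) -
            (if R = B.erase i then c * w i S P else 0) := by
        intro R hR
        have hiR : i ∉ R := by
          rcases mem_erase.1 hR with ⟨hne, hRQ⟩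
          exact fun h => hne (part_eq hQ hRQ hT h hiT)
        have hiffp : (S = S ∧ moveTo (moveTo P i S) i R = P) ↔ R = B.erase i := by
          constructor
          · rintro ⟨-, h⟩
            have hmemB : insert i R ∈ P := by
              rw [← h]; exact mem_moveTo.2 (Or.inr (Or.inl rfl))
            have hEB : insert i R = B := hBu _ ⟨hmemB, mem_insert_self i R⟩
            rw [← hEB, erase_insert hiR]
          · rintro rfl
            exact ⟨rfl, moveTo_moveTo hP hBP hiB hS hi⟩
        by_cases hRB : R = B.erase i
        · rw [(hiffp.2 hRB).2]
          simp only [sgame, hTS, hne1, hne2, hRB, eq_self_iff_true, true_and,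
            and_true, and_self, false_and, and_false, if_true, if_false,
            ite_true, ite_false]
          ring
        · have h4' : moveTo (moveTo P i S) i R ≠ P := fun h => hRB (hiffp.1 ⟨rfl, h⟩)
          simp only [sgame, hTS, hne1, hne2, hRB, h4', eq_self_iff_true, true_and,
            and_true, and_self, false_and, and_false, if_true, if_false,
            ite_true, ite_false]
          ring
      have hn := hnorm i (insert i S) (moveTo P i S) hQ hT hiT
      rw [hTS] at hn
      simp only [mc]
      rw [Finset.sum_congr rfl key, Finset.sum_sub_distrib, ← Finset.sum_mul, hn,
        one_mul, Finset.sum_ite_eq' _ (B.erase i) (fun _ => c * w i S P),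
        if_pos hmem, sub_self]
    · apply Finset.sum_eq_zero
      intro R hR
      have hiR : i ∉ R := fun h =>
        (mem_erase.1 hR).1 (part_eq hQ (mem_erase.1 hR).2 hT h hiT)
      have hTSne : T ≠ S := fun h => hi (h ▸ hiT)
      have hTiS : T.erase i ≠ insert i S := by
        intro h
        have := mem_insert_self i S
        rw [← h] at this
        exact notMem_erase i T this
      have h2 : ¬ (T.erase i = S ∧ moveTo Q i R = P) := by
        rintro ⟨h3, h4⟩
        apply hcase
        have hinv := moveTo_moveTo hQ hT hiT (mem_of_mem_erase hR) hiR
        rw [h4, h3] at hinv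
        exact ⟨by rw [← insert_erase hiT, h3], hinv.symm⟩
      simp only [sgame]
      rw [if_neg hcase, if_neg (fun h => hTSne h.1), if_neg (fun h => hTiS h.1),
        if_neg h2]
      ring
  refine ⟨hmc, ?_⟩
  intro φ hadd hnull
  have hQ₀p : IsPartition (moveTo P i S) := moveTo_isPartition hP hS hi
  have hg1 : IsGame (fun T' Q' =>
      c * w i S P * sgame (insert i S) (moveTo P i S) T' Q') := by
    intro T' Q' h
    have h1 : sgame (insert i S) (moveTo P i S) T' Q' = 0 := by
      rw [sgame, if_neg]
      rintro ⟨rfl, rfl⟩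
      exact h ⟨hQ₀p, mem_moveTo.2 (Or.inr (Or.inl rfl)), by simp⟩
    simp [h1]
  have hg2 : IsGame (fun T' Q' => c * sgame S P T' Q') := by
    intro T' Q' h
    have h1 : sgame S P T' Q' = 0 := by
      rw [sgame, if_neg]
      rintro ⟨rfl, rfl⟩
      exact h ⟨hP, hS, hSne⟩
    simp [h1]
  have hgsum : IsGame (fun T' Q' => c * sgame S P T' Q' +
      c * w i S P * sgame (insert i S) (moveTo P i S) T' Q') := by
    intro T' Q' h
    have h1 := hg1 T' Q' h
    have h2 := hg2 T' Q' h
    show c * sgame S P T' Q' +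
      c * w i S P * sgame (insert i S) (moveTo P i S) T' Q' = 0
    simp only at h1 h2
    rw [h1, h2, add_zero]
  have hfun : (fun T' Q' => c * sgame S P T' Q' +
      c * w i S P * sgame (insert i S) (moveTo P i S) T' Q') =
      (fun T' Q' => c * (w i S P * sgame (insert i S) (moveTo P i S) T' Q' +
        sgame S P T' Q')) := by
    funext T' Q'; ring
  have h0 : φ (fun T' Q' => c * sgame S P T' Q' +
      c * w i S P * sgame (insert i S) (moveTo P i S) T' Q') i = 0 := by
    apply hnull _ hgsum i
    intro T Q h1 h2 h3
    rw [hfun]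
    exact hmc T Q h1 h2 h3
  have hsum := hadd (fun T' Q' => c * sgame S P T' Q')
    (fun T' Q' => c * w i S P * sgame (insert i S) (moveTo P i S) T' Q') hg2 hg1 i
  rw [h0] at hsum
  linarith
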